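/- Let A be an algebra with mean value on ℝ^N, with mean value functional M. Then there exists a Borel (regular) probability measure β on the spectrum Δ(A) — the M-measure of A — such that M(u) = ∫_{Δ(A)} G(u) dβ for every u ∈ A. -/

import Mathlib

open MeasureTheory Filter Topology BoundedContinuousFunction

noncomputable section

/-- A bounded (continuous) function `u : ℝ^N → ℂ` possesses the mean value `m` if for
every integrable `φ`, `∫ u(x/ε) φ(x) dx → m ∫ φ(x) dx` as `ε → 0⁺`. -/
def HasMeanValueC {N : ℕ} (u : (Fin N → ℝ) → ℂ) (m : ℂ) : Prop :=
  ∀ φ : (Fin N → ℝ) → ℂ, Integrable φ →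
    Tendsto (fun ε : ℝ => ∫ x, u (ε⁻¹ • x) * φ x) (𝓝[>] (0 : ℝ))
      (𝓝 (m * ∫ x, φ x))

/-- An algebra with mean value on `ℝ^N`: a closed, conjugation-stable, translation-invariant
subalgebra of the bounded continuous functions `ℝ^N → ℂ` consisting of uniformly continuous
functions, each of which possesses a mean value. -/
structure MVAlgebra (N : ℕ) where
  carrier : Subalgebra ℂ ((Fin N → ℝ) →ᵇ ℂ)
  uniformCont : ∀ u ∈ carrier, UniformContinuous (⇑u)
  isClosed : IsClosed (carrier : Set ((Fin N → ℝ) →ᵇ ℂ))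
  star_mem : ∀ u ∈ carrier, star u ∈ carrier
  translate_mem : ∀ u ∈ carrier, ∀ a : Fin N → ℝ,
    u.compContinuous ⟨fun x => x + a, continuous_id.add continuous_const⟩ ∈ carrier
  exists_mean : ∀ u ∈ carrier, ∃ m : ℂ, HasMeanValueC (⇑u) m

/-- The spectrum `Δ(A)` of an algebra with mean value: the character space of `A`
with the weak-* topology. -/
abbrev MVSpectrum {N : ℕ} (A : MVAlgebra N) := WeakDual.characterSpace ℂ A.carrier


set_option maxHeartbeats 1000000
open MeasureTheory Filter Topology BoundedContinuousFunction
open scoped NNReal ENNReal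
noncomputable section

namespace RMKaux
open TopologicalSpace

lemma real_piece (t a b : ℝ) (hb : 0 ≤ b) :
    min (max (t - a) 0) b = min t (a + b) - min t a := by
  simp only [min_def, max_def]
  split_ifs <;> linarith

variable {X : Type*} [TopologicalSpace X] [CompactSpace X] [T2Space X]
variable (Λ : C(X, ℝ) →ₗ[ℝ] ℝ)

/-- Functions that are nonnegative and at least 1 on `K`. -/
def FF (K : Set X) : Set C(X, ℝ) := {f | (∀ x, 0 ≤ f x) ∧ ∀ x ∈ K, 1 ≤ f x}

lemma one_mem_FF (K : Set X) : (1 : C(X, ℝ)) ∈ FF K :=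
  ⟨fun _ => zero_le_one, fun _ _ => le_refl 1⟩

variable (hpos : ∀ f : C(X, ℝ), (∀ x, 0 ≤ f x) → 0 ≤ Λ f)
include hpos

lemma lam_mono {f g : C(X, ℝ)} (h : ∀ x, f x ≤ g x) : Λ f ≤ Λ g := by
  have h0 : 0 ≤ Λ (g - f) := hpos _ (fun x => by simpa using sub_nonneg.2 (h x))
  have : Λ (g - f) = Λ g - Λ f := map_sub Λ g f
  linarith

/-- The Riesz content (real-valued). -/
def rc (K : Set X) : ℝ := sInf (Λ '' FF K)

lemma bddBelow_FF (K : Set X) : BddBelow (Λ '' FF K) :=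
  ⟨0, by rintro a ⟨f, hf, rfl⟩; exact hpos f hf.1⟩

lemma rc_le {K : Set X} {f : C(X, ℝ)} (hf : f ∈ FF K) : rc Λ K ≤ Λ f :=
  csInf_le (bddBelow_FF Λ hpos K) ⟨f, hf, rfl⟩

lemma le_rc {K : Set X} {a : ℝ} (h : ∀ f ∈ FF K, a ≤ Λ f) : a ≤ rc Λ K :=
  le_csInf ⟨Λ 1, 1, one_mem_FF K, rfl⟩ (by rintro b ⟨f, hf, rfl⟩; exact h f hf)

lemma rc_nonneg (K : Set X) : 0 ≤ rc Λ K :=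
  le_rc Λ hpos (fun f hf => hpos f hf.1)

lemma rc_mono {K₁ K₂ : Set X} (h : K₁ ⊆ K₂) : rc Λ K₁ ≤ rc Λ K₂ :=
  le_rc Λ hpos (fun f hf => rc_le Λ hpos ⟨fun x => hf.1 x, fun x hx => hf.2 x (h hx)⟩)

lemma rc_exists_lt {K : Set X} {ε : ℝ} (hε : 0 < ε) :
    ∃ f ∈ FF K, Λ f < rc Λ K + ε := by
  obtain ⟨a, ⟨f, hf, rfl⟩, ha⟩ := exists_lt_of_csInf_lt
    (Set.Nonempty.image Λ ⟨1, one_mem_FF K⟩) (lt_add_of_pos_right (rc Λ K) hε)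
  exact ⟨f, hf, ha⟩

lemma rc_union_le (K₁ K₂ : Set X) : rc Λ (K₁ ∪ K₂) ≤ rc Λ K₁ + rc Λ K₂ := by
  have h2 : rc Λ (K₁ ∪ K₂) - rc Λ K₂ ≤ rc Λ K₁ := by
    apply le_rc Λ hpos
    intro f₁ h₁
    have h3 : rc Λ (K₁ ∪ K₂) - Λ f₁ ≤ rc Λ K₂ := by
      apply le_rc Λ hpos
      intro f₂ h₂
      have hmem : f₁ + f₂ ∈ FF (K₁ ∪ K₂) := by
        refine ⟨fun x => add_nonneg (h₁.1 x) (h₂.1 x), fun x hx => ?_⟩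
        rcases hx with hx | hx
        · calc (1:ℝ) ≤ f₁ x := h₁.2 x hx
            _ ≤ f₁ x + f₂ x := le_add_of_nonneg_right (h₂.1 x)
            _ = (f₁ + f₂) x := rfl
        · calc (1:ℝ) ≤ f₂ x := h₂.2 x hx
            _ ≤ f₁ x + f₂ x := le_add_of_nonneg_left (h₁.1 x)
            _ = (f₁ + f₂) x := rfl
      have := rc_le Λ hpos hmem
      have hadd : Λ (f₁ + f₂) = Λ f₁ + Λ f₂ := map_add Λ f₁ f₂
      linarith
    linarith
  linarith

lemma rc_union_eq {K₁ K₂ : Set X} (hK₁ : IsCompact K₁) (hK₂ : IsCompact K₂)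
    (hd : Disjoint K₁ K₂) : rc Λ (K₁ ∪ K₂) = rc Λ K₁ + rc Λ K₂ := by
  refine le_antisymm (rc_union_le Λ hpos K₁ K₂) ?_
  obtain ⟨q, hq0, hq1, hq01⟩ :=
    exists_continuous_zero_one_of_isClosed hK₁.isClosed hK₂.isClosed hd
  apply le_rc Λ hpos
  intro f hf
  have hmem₁ : f * (1 - q) ∈ FF K₁ := by
    refine ⟨fun x => mul_nonneg (hf.1 x) (by simpa using (hq01 x).2), fun x hx => ?_⟩
    have : q x = 0 := hq0 hx
    have h1 : (f * (1 - q)) x = f x * (1 - q x) := rfl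
    rw [h1, this]
    simpa using hf.2 x (Or.inl hx)
  have hmem₂ : f * q ∈ FF K₂ := by
    refine ⟨fun x => mul_nonneg (hf.1 x) (hq01 x).1, fun x hx => ?_⟩
    have : q x = 1 := hq1 hx
    have h1 : (f * q) x = f x * q x := rfl
    rw [h1, this]
    simpa using hf.2 x (Or.inr hx)
  have hsplit : f * (1 - q) + f * q = f := by ring
  have := rc_le Λ hpos hmem₁
  have := rc_le Λ hpos hmem₂
  have hadd : Λ (f * (1 - q)) + Λ (f * q) = Λ f := by
    rw [← map_add, hsplit]
  linarith

/-- The Riesz content as a `Content`. -/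
def content : Content X where
  toFun K := (rc Λ K.1).toNNReal
  mono' K₁ K₂ h := Real.toNNReal_mono (rc_mono Λ hpos h)
  sup_disjoint' K₁ K₂ hd _ _ := by
    have hd' : Disjoint K₁.carrier K₂.carrier := hd
    show (rc Λ (K₁.carrier ∪ K₂.carrier)).toNNReal
        = (rc Λ K₁.carrier).toNNReal + (rc Λ K₂.carrier).toNNReal
    rw [rc_union_eq Λ hpos K₁.2 K₂.2 hd',
      Real.toNNReal_add (rc_nonneg Λ hpos _) (rc_nonneg Λ hpos _)]
  sup_le' K₁ K₂ := by
    show (rc Λ (K₁.carrier ∪ K₂.carrier)).toNNReal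
        ≤ (rc Λ K₁.carrier).toNNReal + (rc Λ K₂.carrier).toNNReal
    calc (rc Λ (K₁.carrier ∪ K₂.carrier)).toNNReal
        ≤ (rc Λ K₁.carrier + rc Λ K₂.carrier).toNNReal :=
          Real.toNNReal_mono (rc_union_le Λ hpos K₁.carrier K₂.carrier)
      _ = (rc Λ K₁.carrier).toNNReal + (rc Λ K₂.carrier).toNNReal :=
          Real.toNNReal_add (rc_nonneg Λ hpos _) (rc_nonneg Λ hpos _)

lemma contentRegular : (content Λ hpos).ContentRegular := by
  intro K
  refine le_antisymm (le_iInf₂ fun K' hK' => ?_) ?_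
  · exact ENNReal.coe_le_coe.2 <| Real.toNNReal_mono <|
      rc_mono Λ hpos (hK'.trans interior_subset)
  · refine ENNReal.le_of_forall_pos_le_add fun ε hε _ => ?_
    set S := rc Λ (K : Set X) with hS
    have hS0 : 0 ≤ S := rc_nonneg Λ hpos _
    have hε' : (0:ℝ) < ε := by exact_mod_cast hε
    obtain ⟨f, hf, hΛf⟩ := rc_exists_lt Λ hpos (K := (K : Set X)) (ε := (ε:ℝ)/2) (by linarith)
    set δ : ℝ := ((ε:ℝ)/2)/(S + ε) with hδdef
    have hSε : (0:ℝ) < S + ε := by linarith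
    have hδ0 : 0 < δ := by positivity
    have hδ1 : δ < 1 := by
      rw [hδdef, div_lt_one hSε]; linarith
    have h1δ : (0:ℝ) < 1 - δ := by linarith
    set K' : Compacts X := ⟨{x | 1 - δ ≤ f x},
      ((isClosed_le continuous_const f.continuous)).isCompact⟩ with hK'def
    have hsub : (K : Set X) ⊆ interior (K' : Set X) := by
      have hopen : IsOpen {x | 1 - δ < f x} := isOpen_lt continuous_const f.continuous
      have hsub' : {x | 1 - δ < f x} ⊆ (K' : Set X) := fun y hy => (le_of_lt (show 1 - δ < f y from hy) : y ∈ {x | 1 - δ ≤ f x})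
      intro x hx
      exact interior_maximal hsub' hopen (show 1 - δ < f x by have := hf.2 x hx; linarith)
    have hg : (1 - δ)⁻¹ • f ∈ FF (K' : Set X) := by
      constructor
      · intro x
        have : ((1 - δ)⁻¹ • f) x = (1 - δ)⁻¹ * f x := rfl
        rw [this]
        exact mul_nonneg (by positivity) (hf.1 x)
      · intro x hx
        have hfx : 1 - δ ≤ f x := hx
        have heq : ((1 - δ)⁻¹ • f) x = (1 - δ)⁻¹ * f x := rfl
        have h2 : (1 - δ)⁻¹ * (1 - δ) = 1 := by field_simp
        rw [heq]
        calc (1:ℝ) = (1 - δ)⁻¹ * (1 - δ) := h2.symm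
          _ ≤ (1 - δ)⁻¹ * f x := mul_le_mul_of_nonneg_left hfx (by positivity)
    have hrcK' : rc Λ (K' : Set X) ≤ (1 - δ)⁻¹ * Λ f := by
      have := rc_le Λ hpos hg
      rwa [_root_.map_smul, smul_eq_mul] at this
    have hb : (1 - δ)⁻¹ * Λ f ≤ S + ε := by
      have h1 : (1:ℝ) - δ = (S + ε/2)/(S + ε) := by
        rw [hδdef]; field_simp; ring
      have h2 : (0:ℝ) < S + ε/2 := by linarith
      have h3 : (1 - δ)⁻¹ = (S + ε)/(S + ε/2) := by
        rw [h1, inv_div]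
      rw [h3]
      have hΛf' : Λ f ≤ S + ε/2 := le_of_lt hΛf
      calc (S + ε)/(S + ε/2) * Λ f ≤ (S + ε)/(S + ε/2) * (S + ε/2) :=
            mul_le_mul_of_nonneg_left hΛf' (by positivity)
        _ = S + ε := by field_simp
    have hrc2 : rc Λ (K' : Set X) ≤ S + ε := le_trans hrcK' hb
    calc (⨅ (K' : Compacts X) (_ : (K : Set X) ⊆ interior (K' : Set X)),
            (content Λ hpos) K')
        ≤ (content Λ hpos) K' := biInf_le _ hsub
      _ = ((rc Λ (K' : Set X)).toNNReal : ℝ≥0∞) := rfl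
      _ ≤ (((S + ε : ℝ)).toNNReal : ℝ≥0∞) := ENNReal.coe_le_coe.2 (Real.toNNReal_mono hrc2)
      _ = ((S.toNNReal + ε : ℝ≥0) : ℝ≥0∞) := by
          rw [Real.toNNReal_add hS0 (le_of_lt hε')]
          norm_cast
          rw [Real.toNNReal_coe]
      _ = (content Λ hpos) K + ε := by
          rw [ENNReal.coe_add]; rfl

end RMKaux

section RMKmain

open TopologicalSpace RMKaux MeasureTheory

variable {X : Type*} [TopologicalSpace X] [CompactSpace X] [T2Space X]
variable [MeasurableSpace X] [BorelSpace X]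
variable (Λ : C(X, ℝ) →ₗ[ℝ] ℝ)
variable (hpos : ∀ f : C(X, ℝ), (∀ x, 0 ≤ f x) → 0 ≤ Λ f)

include hpos

theorem rmk_exists (h1 : Λ 1 = 1) :
    ∃ β : Measure X, IsProbabilityMeasure β ∧ β.Regular ∧
      ∀ f : C(X, ℝ), Λ f = ∫ x, f x ∂β := by
  classical
  set κ := content Λ hpos with hκ
  set β := κ.measure with hβ
  have hKc : ∀ K : Compacts X, β K.carrier = ((rc Λ K.carrier).toNNReal : ℝ≥0∞) :=
    fun K => κ.measure_eq_content_of_regular (contentRegular Λ hpos) K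
  have hrc_univ : rc Λ (Set.univ : Set X) = 1 := by
    refine le_antisymm ?_ ?_
    · have := rc_le Λ hpos (K := (Set.univ : Set X)) (one_mem_FF _)
      rwa [h1] at this
    · apply le_rc Λ hpos
      intro f hf
      have : Λ 1 ≤ Λ f := lam_mono Λ hpos (fun x => hf.2 x (Set.mem_univ x))
      rwa [h1] at this
  have huniv : β Set.univ = 1 := by
    have h0 := hKc ⊤
    rw [show (⊤ : Compacts X).carrier = Set.univ from rfl] at h0
    rw [h0, hrc_univ]
    simp
  haveI hprob : IsProbabilityMeasure β := ⟨huniv⟩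
  have hreg : β.Regular := MeasureTheory.Content.regular κ
  have hInt : ∀ g : C(X, ℝ), Integrable (⇑g) β := by
    intro g
    have := (BoundedContinuousFunction.mkOfCompact g).integrable β
    exact this
  have hβK : ∀ K : Compacts X, (β K.carrier).toReal = rc Λ K.carrier := by
    intro K
    rw [hKc K]
    simp [Real.coe_toNNReal _ (rc_nonneg Λ hpos _)]
  -- key identity for nonnegative functions
  have key : ∀ f : C(X, ℝ), (∀ x, 0 ≤ f x) → Λ f = ∫ x, f x ∂β := by
    intro f hf
    set C₀ : ℝ := rc Λ (Set.univ : Set X) with hC₀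
    have hC₀0 : 0 ≤ C₀ := rc_nonneg Λ hpos _
    have key2 : ∀ n : ℕ, 0 < n → |Λ f - ∫ x, f x ∂β| ≤ C₀ / n := by
      intro n hn
      have hn' : (0:ℝ) < n := by exact_mod_cast hn
      set m : ℕ := ⌈‖f‖ * n⌉₊ with hm
      set φ : ℕ → C(X, ℝ) := fun k =>
        ⟨fun x => min (max (f x - k / n) 0) (1 / n),
          ((f.continuous.sub continuous_const).max continuous_const).min continuous_const⟩
        with hφ
      set Ks : ℕ → Compacts X := fun k =>
        ⟨{x | (k:ℝ)/n ≤ f x}, (isClosed_le continuous_const f.continuous).isCompact⟩ with hKs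
      set c : ℕ → ℝ := fun k => rc Λ (Ks k).carrier with hc
      have hφ_apply : ∀ k x, φ k x = min (max (f x - k / n) 0) (1 / n) := fun k x => rfl
      have hφ_nonneg : ∀ k x, 0 ≤ φ k x := by
        intro k x
        rw [hφ_apply]
        exact le_min (le_max_right _ _) (by positivity)
      have hc_nonneg : ∀ k, 0 ≤ c k := fun k => rc_nonneg Λ hpos _
      -- value of φ k on Ks (k+1) : equals 1/n
      have hφ_on : ∀ k x, x ∈ (Ks (k+1)).carrier → φ k x = 1 / n := by
        intro k x hx
        have hx' : ((k:ℝ)+1)/n ≤ f x := by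
          have : (((k+1):ℕ):ℝ)/n ≤ f x := hx
          push_cast at this
          exact this
        rw [hφ_apply]
        have h1 : (1:ℝ)/n ≤ f x - k/n := by
          have h2 : ((k:ℝ)+1)/n = k/n + 1/n := by ring
          rw [h2] at hx'
          linarith
        have h0 : (0:ℝ) ≤ f x - k/n := le_trans (by positivity) h1
        rw [max_eq_left h0, min_eq_right h1]
      -- φ k vanishes outside Ks k
      have hφ_out : ∀ k x, x ∉ (Ks k).carrier → φ k x = 0 := by
        intro k x hx
        have hx' : f x < (k:ℝ)/n := lt_of_not_ge hx
        rw [hφ_apply, max_eq_right (by linarith), min_eq_left (by positivity)]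
      have hφ_le : ∀ k x, φ k x ≤ 1/n := fun k x => by
        rw [hφ_apply]; exact min_le_right _ _
      -- pointwise sum identity
      have hfm : ∀ x, f x ≤ (m:ℝ)/n := by
        intro x
        rw [le_div_iff₀ hn']
        have h1 : f x ≤ ‖f‖ := by
          have := f.norm_coe_le_norm x
          exact (abs_le.mp (by rwa [Real.norm_eq_abs] at this)).2
        have h2 : ‖f‖ * n ≤ (m:ℝ) := Nat.le_ceil _
        have h3 : f x * n ≤ ‖f‖ * n := mul_le_mul_of_nonneg_right h1 hn'.le
        linarith
      have hsum : ∀ x, ∑ k ∈ Finset.range m, φ k x = f x := by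
        intro x
        have hcast : ∀ k : ℕ, φ k x =
            (fun j : ℕ => min (f x) ((j:ℝ) / n)) (k+1) - (fun j : ℕ => min (f x) ((j:ℝ)/n)) k := by
          intro k
          rw [hφ_apply]
          have := real_piece (f x) ((k:ℝ)/n) (1/n) (by positivity)
          rw [this]
          have harg : (k:ℝ)/n + 1/n = (((k+1):ℕ):ℝ)/n := by
            push_cast; rw [← add_div]
          rw [harg]
        rw [Finset.sum_congr rfl (fun k _ => hcast k),
          Finset.sum_range_sub (fun j : ℕ => min (f x) ((j:ℝ)/n)) m]
        have e1 : min (f x) ((m:ℝ)/n) = f x := min_eq_left (hfm x)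
        have e2 : min (f x) (((0:ℕ):ℝ)/n) = 0 := by
          rw [show (((0:ℕ):ℝ)/n) = 0 by norm_num]
          exact min_eq_right (hf x)
        rw [e1, e2, sub_zero]
      have hfsum : f = ∑ k ∈ Finset.range m, φ k := by
        ext x
        rw [ContinuousMap.coe_sum, Finset.sum_apply]
        exact (hsum x).symm
      -- Λ bounds
      have hΛ_low : ∀ k, c (k+1) / n ≤ Λ (φ k) := by
        intro k
        have hmem : (n:ℝ) • φ k ∈ FF (X := X) (Ks (k+1)).carrier := by
          constructor
          · intro x
            have : ((n:ℝ) • φ k) x = n * φ k x := rfl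
            rw [this]
            exact mul_nonneg hn'.le (hφ_nonneg k x)
          · intro x hx
            have : ((n:ℝ) • φ k) x = n * φ k x := rfl
            rw [this, hφ_on k x hx]
            rw [mul_one_div, div_self (ne_of_gt hn')]
        have := rc_le Λ hpos hmem
        rw [_root_.map_smul, smul_eq_mul] at this
        rw [div_le_iff₀ hn']
        calc c (k+1) ≤ n * Λ (φ k) := this
          _ = Λ (φ k) * n := by ring
      have hΛ_up : ∀ k, Λ (φ k) ≤ c k / n := by
        intro k
        rw [le_div_iff₀ hn']
        have hle : (n:ℝ) * Λ (φ k) ≤ c k := by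
          have h2 : Λ ((n:ℝ) • φ k) ≤ rc Λ (Ks k).carrier := by
            apply le_rc Λ hpos
            intro g hg
            apply lam_mono Λ hpos
            intro x
            have : ((n:ℝ) • φ k) x = n * φ k x := rfl
            rw [this]
            by_cases hx : x ∈ (Ks k).carrier
            · calc (n:ℝ) * φ k x ≤ n * (1/n) := by
                    exact mul_le_mul_of_nonneg_left (hφ_le k x) hn'.le
                _ = 1 := by field_simp
                _ ≤ g x := hg.2 x hx
            · rw [hφ_out k x hx, mul_zero]
              exact hg.1 x
          rwa [_root_.map_smul, smul_eq_mul] at h2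
        linarith
      -- integral bounds
      have hKmeas : ∀ k, MeasurableSet (Ks k).carrier :=
        fun k => (isClosed_le continuous_const f.continuous).measurableSet
      have hind_int : ∀ k, Integrable ((Ks k).carrier.indicator (fun _ => (1:ℝ)/n)) β :=
        fun k => (integrable_const ((1:ℝ)/n)).indicator (hKmeas k)
      have hI_low : ∀ k, c (k+1) / n ≤ ∫ x, φ k x ∂β := by
        intro k
        have hle : ∀ x, (Ks (k+1)).carrier.indicator (fun _ => (1:ℝ)/n) x ≤ φ k x := by
          intro x
          by_cases hx : x ∈ (Ks (k+1)).carrier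
          · rw [Set.indicator_of_mem hx, hφ_on k x hx]
          · rw [Set.indicator_of_notMem hx]
            exact hφ_nonneg k x
        calc c (k+1) / n = (β (Ks (k+1)).carrier).toReal * (1/n) := by
              rw [hβK (Ks (k+1))]
              field_simp [hc]
              rfl
          _ = ∫ x, (Ks (k+1)).carrier.indicator (fun _ => (1:ℝ)/n) x ∂β := by
              rw [integral_indicator_const _ (hKmeas (k+1))]
              simp [smul_eq_mul]
              exact Or.inl rfl
          _ ≤ ∫ x, φ k x ∂β := integral_mono (hind_int (k+1)) (hInt (φ k)) hle
      have hI_up : ∀ k, ∫ x, φ k x ∂β ≤ c k / n := by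
        intro k
        have hle : ∀ x, φ k x ≤ (Ks k).carrier.indicator (fun _ => (1:ℝ)/n) x := by
          intro x
          by_cases hx : x ∈ (Ks k).carrier
          · rw [Set.indicator_of_mem hx]
            exact hφ_le k x
          · rw [Set.indicator_of_notMem hx, hφ_out k x hx]
        calc ∫ x, φ k x ∂β
            ≤ ∫ x, (Ks k).carrier.indicator (fun _ => (1:ℝ)/n) x ∂β :=
              integral_mono (hInt (φ k)) (hind_int k) hle
          _ = (β (Ks k).carrier).toReal * (1/n) := by
              rw [integral_indicator_const _ (hKmeas k)]
              simp [smul_eq_mul]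
              exact Or.inl rfl
          _ = c k / n := by
              rw [hβK (Ks k)]
              field_simp [hc]
              rfl
      -- assemble
      have hΛf : Λ f = ∑ k ∈ Finset.range m, Λ (φ k) := by
        rw [hfsum, map_sum]
      have hIf : ∫ x, f x ∂β = ∑ k ∈ Finset.range m, ∫ x, φ k x ∂β := by
        calc ∫ x, f x ∂β = ∫ x, ∑ k ∈ Finset.range m, φ k x ∂β := by
              congr 1
              ext x
              exact (hsum x).symm
          _ = ∑ k ∈ Finset.range m, ∫ x, φ k x ∂β :=
              integral_finset_sum _ (fun k _ => hInt (φ k))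
      set L : ℝ := ∑ k ∈ Finset.range m, c (k+1) / n with hL
      set U : ℝ := ∑ k ∈ Finset.range m, c k / n with hU
      have hΛ_mem : L ≤ Λ f ∧ Λ f ≤ U := by
        constructor
        · rw [hΛf]; exact Finset.sum_le_sum (fun k _ => hΛ_low k)
        · rw [hΛf]; exact Finset.sum_le_sum (fun k _ => hΛ_up k)
      have hI_mem : L ≤ (∫ x, f x ∂β) ∧ (∫ x, f x ∂β) ≤ U := by
        constructor
        · rw [hIf]; exact Finset.sum_le_sum (fun k _ => hI_low k)
        · rw [hIf]; exact Finset.sum_le_sum (fun k _ => hI_up k)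
      have hUL : U - L = c 0 / n - c m / n := by
        rw [hU, hL, ← Finset.sum_sub_distrib]
        have : ∀ k ∈ Finset.range m, c k / n - c (k+1) / n =
            (fun j => c j / n) k - (fun j => c j / n) (k+1) := fun k _ => rfl
        rw [Finset.sum_congr rfl this, Finset.sum_range_sub' (fun j => c j / n) m]
      have hc0 : c 0 ≤ C₀ := by
        apply rc_mono Λ hpos
        intro x _
        exact Set.mem_univ x
      have habs : |Λ f - ∫ x, f x ∂β| ≤ U - L := by
        rw [abs_sub_le_iff]
        constructor
        · linarith [hΛ_mem.1, hΛ_mem.2, hI_mem.1, hI_mem.2]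
        · linarith [hΛ_mem.1, hΛ_mem.2, hI_mem.1, hI_mem.2]
      calc |Λ f - ∫ x, f x ∂β| ≤ U - L := habs
        _ = c 0 / n - c m / n := hUL
        _ ≤ C₀ / n := by
            have h2 : 0 ≤ c m / n := div_nonneg (hc_nonneg m) hn'.le
            have h3 : c 0 / n ≤ C₀ / n := (div_le_div_iff_of_pos_right hn').mpr hc0
            linarith
    -- conclude equality from the bound
    have habs0 : |Λ f - ∫ x, f x ∂β| = 0 := by
      by_contra hne
      have hpos' : 0 < |Λ f - ∫ x, f x ∂β| := lt_of_le_of_ne (abs_nonneg _) (Ne.symm hne)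
      obtain ⟨n, hn⟩ := exists_nat_gt (C₀ / |Λ f - ∫ x, f x ∂β|)
      have hn0 : 0 < n := by
        by_contra hn0
        push_neg at hn0
        interval_cases n
        · simp at hn
          nlinarith [div_nonneg hC₀0 hpos'.le]
      have h4 := key2 n hn0
      have h5 : C₀ / n < |Λ f - ∫ x, f x ∂β| := by
        rw [div_lt_iff₀ (by exact_mod_cast hn0)]
        rw [div_lt_iff₀ hpos'] at hn
        linarith [hn]
      linarith
    have := abs_eq_zero.mp habs0
    linarith [sub_eq_zero.mp this]
  -- general case by shifting
  refine ⟨β, hprob, hreg, fun f => ?_⟩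
  set cst : ℝ := ‖f‖ with hcst
  have hfc : ∀ x, 0 ≤ (f + cst • (1 : C(X,ℝ))) x := by
    intro x
    have h1 : |f x| ≤ ‖f‖ := by
      have := f.norm_coe_le_norm x
      rwa [Real.norm_eq_abs] at this
    have : (f + cst • (1 : C(X,ℝ))) x = f x + cst := by
      simp [hcst]
    rw [this]
    have := (abs_le.mp h1).1
    linarith
  have hkey := key (f + cst • (1 : C(X,ℝ))) hfc
  have hΛside : Λ (f + cst • (1 : C(X,ℝ))) = Λ f + cst := by
    rw [map_add, _root_.map_smul, smul_eq_mul, h1, mul_one]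
  have hIside : ∫ x, (f + cst • (1 : C(X,ℝ))) x ∂β = (∫ x, f x ∂β) + cst := by
    have hptw : ∀ x, (f + cst • (1 : C(X,ℝ))) x = f x + cst := by
      intro x; simp [hcst]
    calc ∫ x, (f + cst • (1 : C(X,ℝ))) x ∂β = ∫ x, (f x + cst) ∂β := by
          congr 1; ext x; exact hptw x
      _ = (∫ x, f x ∂β) + ∫ _x, cst ∂β := integral_add (hInt f) (integrable_const cst)
      _ = (∫ x, f x ∂β) + cst := by
          rw [integral_const]
          simp [huniv]
  linarith [hkey, hΛside, hIside]

end RMKmain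

section MeanValue

open MeasureTheory Filter Topology BoundedContinuousFunction Complex

variable {N : ℕ}

/-- The reference test function: indicator of the unit ball. -/
def phi0 (N : ℕ) : (Fin N → ℝ) → ℂ :=
  (Metric.ball (0 : Fin N → ℝ) 1).indicator (fun _ => 1)

lemma integrable_phi0 : Integrable (phi0 N) := by
  rw [phi0, integrable_indicator_iff measurableSet_ball]
  exact integrableOn_const measure_ball_lt_top.ne

lemma integral_phi0 :
    ∫ x, phi0 N x = (((volume (Metric.ball (0 : Fin N → ℝ) 1)).toReal : ℝ) : ℂ) := by
  rw [phi0, integral_indicator_const _ measurableSet_ball]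
  simp [Measure.real]

lemma ball_toReal_pos : 0 < (volume (Metric.ball (0 : Fin N → ℝ) 1)).toReal :=
  ENNReal.toReal_pos (Metric.measure_ball_pos volume 0 one_pos).ne' measure_ball_lt_top.ne

lemma integral_phi0_ne_zero : (∫ x, phi0 N x) ≠ 0 := by
  rw [integral_phi0]
  exact_mod_cast ne_of_gt (by exact_mod_cast ball_toReal_pos (N := N))

lemma integrable_mul_phi0 (u : (Fin N → ℝ) →ᵇ ℂ) (ε : ℝ) :
    Integrable (fun x => u (ε⁻¹ • x) * phi0 N x) :=
  integrable_phi0.bdd_mul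
    ((u.continuous.comp (continuous_const_smul ε⁻¹)).aestronglyMeasurable)
    (Filter.Eventually.of_forall fun x => u.norm_coe_le_norm _)

lemma hasMeanValueC_unique {u : (Fin N → ℝ) → ℂ} {m₁ m₂ : ℂ}
    (h₁ : HasMeanValueC u m₁) (h₂ : HasMeanValueC u m₂) : m₁ = m₂ := by
  have t₁ := h₁ (phi0 N) integrable_phi0
  have t₂ := h₂ (phi0 N) integrable_phi0
  have := tendsto_nhds_unique t₁ t₂
  exact mul_right_cancel₀ integral_phi0_ne_zero this

end MeanValue

section Mlemmas

open MeasureTheory Filter Topology BoundedContinuousFunction Complex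

variable {N : ℕ} {A : MVAlgebra N} {M : A.carrier → ℂ}
variable (hM : ∀ u : A.carrier, HasMeanValueC (⇑(u : (Fin N → ℝ) →ᵇ ℂ)) (M u))

include hM

lemma M_add (u v : A.carrier) : M (u + v) = M u + M v := by
  have t₁ := (hM u) (phi0 N) integrable_phi0
  have t₂ := (hM v) (phi0 N) integrable_phi0
  have t₃ := (hM (u + v)) (phi0 N) integrable_phi0
  have funeq : (fun ε : ℝ => ∫ x, ((u + v : A.carrier) : (Fin N → ℝ) →ᵇ ℂ) (ε⁻¹ • x) * phi0 N x)
      = fun ε : ℝ => (∫ x, (u : (Fin N → ℝ) →ᵇ ℂ) (ε⁻¹ • x) * phi0 N x)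
        + ∫ x, (v : (Fin N → ℝ) →ᵇ ℂ) (ε⁻¹ • x) * phi0 N x := by
    funext ε
    have hptw : (fun x => ((u + v : A.carrier) : (Fin N → ℝ) →ᵇ ℂ) (ε⁻¹ • x) * phi0 N x)
        = fun x => (u : (Fin N → ℝ) →ᵇ ℂ) (ε⁻¹ • x) * phi0 N x
          + (v : (Fin N → ℝ) →ᵇ ℂ) (ε⁻¹ • x) * phi0 N x := by
      funext x
      have hcoe : ((u + v : A.carrier) : (Fin N → ℝ) →ᵇ ℂ)
          = (u : (Fin N → ℝ) →ᵇ ℂ) + (v : (Fin N → ℝ) →ᵇ ℂ) := rfl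
      rw [hcoe]
      simp [add_mul]
    rw [hptw, integral_add (integrable_mul_phi0 ((u : (Fin N → ℝ) →ᵇ ℂ)) ε)
      (integrable_mul_phi0 ((v : (Fin N → ℝ) →ᵇ ℂ)) ε)]
  rw [funeq] at t₃
  have t₄ := t₁.add t₂
  have := tendsto_nhds_unique t₃ t₄
  have h5 : (M u + M v) * ∫ x, phi0 N x = M u * (∫ x, phi0 N x) + M v * ∫ x, phi0 N x := by ring
  exact mul_right_cancel₀ integral_phi0_ne_zero (this.trans h5.symm)

lemma M_smul (c : ℂ) (u : A.carrier) : M (c • u) = c * M u := by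
  have t₁ := (hM u) (phi0 N) integrable_phi0
  have t₃ := (hM (c • u)) (phi0 N) integrable_phi0
  have funeq : (fun ε : ℝ => ∫ x, ((c • u : A.carrier) : (Fin N → ℝ) →ᵇ ℂ) (ε⁻¹ • x) * phi0 N x)
      = fun ε : ℝ => c * ∫ x, (u : (Fin N → ℝ) →ᵇ ℂ) (ε⁻¹ • x) * phi0 N x := by
    funext ε
    rw [← integral_const_mul]
    congr 1
    funext x
    have hcoe : ((c • u : A.carrier) : (Fin N → ℝ) →ᵇ ℂ) = c • (u : (Fin N → ℝ) →ᵇ ℂ) := rfl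
    rw [hcoe]
    simp [mul_assoc]
  rw [funeq] at t₃
  have t₄ := t₁.const_mul c
  have := tendsto_nhds_unique t₃ t₄
  have h5 : c * M u * ∫ x, phi0 N x = c * (M u * ∫ x, phi0 N x) := by ring
  exact mul_right_cancel₀ integral_phi0_ne_zero (this.trans h5.symm)

lemma M_one : M 1 = 1 := by
  have t₃ := (hM 1) (phi0 N) integrable_phi0
  have funeq : (fun ε : ℝ => ∫ x, ((1 : A.carrier) : (Fin N → ℝ) →ᵇ ℂ) (ε⁻¹ • x) * phi0 N x)
      = fun _ : ℝ => ∫ x, phi0 N x := by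
    funext ε
    congr 1
    funext x
    have hcoe : ((1 : A.carrier) : (Fin N → ℝ) →ᵇ ℂ) = 1 := rfl
    rw [hcoe]
    simp
  rw [funeq] at t₃
  have t₄ : Tendsto (fun _ : ℝ => ∫ x, phi0 N x) (𝓝[>] (0:ℝ)) (𝓝 (∫ x, phi0 N x)) :=
    tendsto_const_nhds
  have := tendsto_nhds_unique t₃ t₄
  have h5 : (1:ℂ) * ∫ x, phi0 N x = ∫ x, phi0 N x := one_mul _
  exact mul_right_cancel₀ integral_phi0_ne_zero (this.trans h5.symm)

lemma M_star (u : A.carrier) :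
    M ⟨star (u : (Fin N → ℝ) →ᵇ ℂ), A.star_mem _ u.2⟩ = starRingEnd ℂ (M u) := by
  have t₁ := (hM u) (phi0 N) integrable_phi0
  set su : A.carrier := ⟨star (u : (Fin N → ℝ) →ᵇ ℂ), A.star_mem _ u.2⟩ with hsu
  have t₃ := (hM su) (phi0 N) integrable_phi0
  have hphi_real : ∀ x, starRingEnd ℂ (phi0 N x) = phi0 N x := by
    intro x
    rw [phi0]
    by_cases hx : x ∈ Metric.ball (0 : Fin N → ℝ) 1
    · rw [Set.indicator_of_mem hx]; simp
    · rw [Set.indicator_of_notMem hx]; simp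
  have funeq : (fun ε : ℝ => ∫ x, (su : (Fin N → ℝ) →ᵇ ℂ) (ε⁻¹ • x) * phi0 N x)
      = fun ε : ℝ => starRingEnd ℂ (∫ x, (u : (Fin N → ℝ) →ᵇ ℂ) (ε⁻¹ • x) * phi0 N x) := by
    funext ε
    rw [← integral_conj]
    congr 1
    funext x
    have hcoe : (su : (Fin N → ℝ) →ᵇ ℂ) (ε⁻¹ • x)
        = starRingEnd ℂ ((u : (Fin N → ℝ) →ᵇ ℂ) (ε⁻¹ • x)) := rfl
    rw [hcoe, map_mul, hphi_real]
  rw [funeq] at t₃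
  have h6 : starRingEnd ℂ (M u * ∫ x, phi0 N x)
      = starRingEnd ℂ (M u) * ∫ x, phi0 N x := by
    rw [map_mul]
    congr 1
    rw [integral_phi0]
    exact Complex.conj_ofReal _
  have t₄ : Tendsto
      (fun ε : ℝ => starRingEnd ℂ (∫ x, (u : (Fin N → ℝ) →ᵇ ℂ) (ε⁻¹ • x) * phi0 N x))
      (𝓝[>] (0:ℝ)) (𝓝 (starRingEnd ℂ (M u * ∫ x, phi0 N x))) :=
    (Complex.continuous_conj.tendsto _).comp t₁
  rw [h6] at t₄
  exact mul_right_cancel₀ integral_phi0_ne_zero (tendsto_nhds_unique t₃ t₄)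

lemma M_pos (u : A.carrier) :
    0 ≤ (M (⟨star (u : (Fin N → ℝ) →ᵇ ℂ), A.star_mem _ u.2⟩ * u)).re ∧
      (M (⟨star (u : (Fin N → ℝ) →ᵇ ℂ), A.star_mem _ u.2⟩ * u)).im = 0 := by
  set w : A.carrier := ⟨star (u : (Fin N → ℝ) →ᵇ ℂ), A.star_mem _ u.2⟩ * u with hw
  have t₃ := (hM w) (phi0 N) integrable_phi0
  set S : Set ℂ := {z : ℂ | 0 ≤ z.re ∧ z.im = 0} with hS
  have hSclosed : IsClosed S :=
    (isClosed_le continuous_const Complex.continuous_re).inter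
      (isClosed_eq Complex.continuous_im continuous_const)
  have hmem : ∀ ε : ℝ, (∫ x, (w : (Fin N → ℝ) →ᵇ ℂ) (ε⁻¹ • x) * phi0 N x) ∈ S := by
    intro ε
    have hindic : (fun x => (w : (Fin N → ℝ) →ᵇ ℂ) (ε⁻¹ • x) * phi0 N x)
        = (Metric.ball (0 : Fin N → ℝ) 1).indicator
            (fun x => (w : (Fin N → ℝ) →ᵇ ℂ) (ε⁻¹ • x)) := by
      funext x
      rw [phi0]
      by_cases hx : x ∈ Metric.ball (0 : Fin N → ℝ) 1
      · rw [Set.indicator_of_mem hx, Set.indicator_of_mem hx, mul_one]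
      · rw [Set.indicator_of_notMem hx, Set.indicator_of_notMem hx, mul_zero]
    have hIO : IntegrableOn (fun x => (w : (Fin N → ℝ) →ᵇ ℂ) (ε⁻¹ • x))
        (Metric.ball (0 : Fin N → ℝ) 1) volume := by
      rw [← integrable_indicator_iff measurableSet_ball, ← hindic]
      exact integrable_mul_phi0 _ ε
    have hval : ∀ y, ((w : (Fin N → ℝ) →ᵇ ℂ) y)
        = ((Complex.normSq ((u : (Fin N → ℝ) →ᵇ ℂ) y) : ℝ) : ℂ) := by
      intro y
      have : (w : (Fin N → ℝ) →ᵇ ℂ) y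
          = starRingEnd ℂ ((u : (Fin N → ℝ) →ᵇ ℂ) y) * (u : (Fin N → ℝ) →ᵇ ℂ) y := rfl
      rw [this]
      exact (mul_comm _ _).trans (Complex.mul_conj _)
    rw [hindic, integral_indicator measurableSet_ball]
    constructor
    · show 0 ≤ (∫ x in Metric.ball (0 : Fin N → ℝ) 1, (w : (Fin N → ℝ) →ᵇ ℂ) (ε⁻¹ • x)).re
      have hnn : 0 ≤ ∫ x in Metric.ball (0 : Fin N → ℝ) 1,
          ((w : (Fin N → ℝ) →ᵇ ℂ) (ε⁻¹ • x)).re := by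
        apply setIntegral_nonneg measurableSet_ball
        intro x _
        rw [hval]
        simp [Complex.normSq_nonneg]
      have heq := integral_re hIO
      simp only [RCLike.re_to_complex] at heq
      rw [← heq]
      exact hnn
    · show (∫ x in Metric.ball (0 : Fin N → ℝ) 1, (w : (Fin N → ℝ) →ᵇ ℂ) (ε⁻¹ • x)).im = 0
      have heq := integral_im hIO
      simp only [RCLike.im_to_complex] at heq
      rw [← heq]
      have : ∀ x, ((w : (Fin N → ℝ) →ᵇ ℂ) (ε⁻¹ • x)).im = 0 := by
        intro x
        rw [hval]
        simp
      simp only [this, integral_zero]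
  have hlim : M w * (∫ x, phi0 N x) ∈ S :=
    hSclosed.mem_of_tendsto t₃ (Filter.Eventually.of_forall hmem)
  rw [integral_phi0] at hlim
  obtain ⟨h1, h2⟩ := hlim
  set r : ℝ := (volume (Metric.ball (0 : Fin N → ℝ) 1)).toReal with hr
  have hrpos : 0 < r := ball_toReal_pos
  have hre : (M w * (r : ℂ)).re = (M w).re * r := by simp
  have him : (M w * (r : ℂ)).im = (M w).im * r := by simp
  rw [hre] at h1
  rw [him] at h2
  constructor
  · exact nonneg_of_mul_nonneg_left h1 hrpos
  · exact (mul_eq_zero.mp h2).resolve_right (ne_of_gt hrpos)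

end Mlemmas

set_option maxHeartbeats 2000000
set_option synthInstance.maxHeartbeats 1000000
section Final

open MeasureTheory Filter Topology BoundedContinuousFunction Complex

variable {N : ℕ}

/-- `A.carrier` as a star subalgebra. -/
def MVAlgebra.S (A : MVAlgebra N) : StarSubalgebra ℂ ((Fin N → ℝ) →ᵇ ℂ) :=
  { A.carrier with star_mem' := fun {u} hu => A.star_mem u hu }


/-- For an algebra with mean value `A` on `ℝ^N` with mean value functional `M`, there exists
a regular Borel probability measure `β` on the spectrum `Δ(A)` — the M-measure of `A` —
such that `M(u) = ∫_{Δ(A)} G(u) dβ` for every `u ∈ A`, where `G(u)(s) = s(u)` is the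
Gelfand transform. -/
theorem stmt5 {N : ℕ} (A : MVAlgebra N)
    [MeasurableSpace (MVSpectrum A)] [BorelSpace (MVSpectrum A)]
    (M : A.carrier → ℂ)
    (hM : ∀ u : A.carrier, HasMeanValueC (⇑(u : (Fin N → ℝ) →ᵇ ℂ)) (M u)) :
    ∃ β : Measure (MVSpectrum A), IsProbabilityMeasure β ∧ β.Regular ∧
      ∀ u : A.carrier, M u = ∫ s : MVSpectrum A, s u ∂β := by
  classical
  haveI hcl : IsClosed ((A.S : Set ((Fin N → ℝ) →ᵇ ℂ))) := A.isClosed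
  haveI : CompleteSpace ↥A.carrier := A.isClosed.completeSpace_coe
  haveI : Nontrivial ↥A.carrier := by
    refine ⟨1, 0, fun h => ?_⟩
    have h2 := congrArg (fun x : ↥A.carrier => ((x : (Fin N → ℝ) →ᵇ ℂ)) 0) h
    simpa using h2
  set g := gelfandStarTransform ↥A.S with hgdef
  -- complexification of real continuous functions on the spectrum
  let toC : C(MVSpectrum A, ℝ) → C(MVSpectrum A, ℂ) := fun f =>
    ⟨fun s => (f s : ℂ), Complex.continuous_ofReal.comp f.continuous⟩
  let Lfun : C(MVSpectrum A, ℝ) → ℝ := fun f => (M (g.symm (toC f))).re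
  have hLadd : ∀ f₁ f₂, Lfun (f₁ + f₂) = Lfun f₁ + Lfun f₂ := by
    intro f₁ f₂
    have h1 : toC (f₁ + f₂) = toC f₁ + toC f₂ := by
      apply ContinuousMap.ext; intro s
      show ((f₁ + f₂) s : ℂ) = (f₁ s : ℂ) + (f₂ s : ℂ)
      push_cast
      simp
    show (M (g.symm (toC (f₁ + f₂)))).re = _
    erw [h1, map_add g.symm, M_add hM]
    exact Complex.add_re _ _
  have hLsmul : ∀ (r : ℝ) (f : C(MVSpectrum A, ℝ)), Lfun (r • f) = r * Lfun f := by
    intro r f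
    have h1 : toC (r • f) = (r : ℂ) • toC f := by
      apply ContinuousMap.ext; intro s
      show ((r • f) s : ℂ) = (r : ℂ) * (f s : ℂ)
      rw [ContinuousMap.smul_apply, smul_eq_mul]
      push_cast
      ring
    show (M (g.symm (toC (r • f)))).re = _
    erw [h1, map_smul g.symm, M_smul hM]
    exact Complex.re_ofReal_mul _ _
  let Λ : C(MVSpectrum A, ℝ) →ₗ[ℝ] ℝ :=
    { toFun := Lfun, map_add' := hLadd, map_smul' := hLsmul }
  have hpos : ∀ f : C(MVSpectrum A, ℝ), (∀ x, 0 ≤ f x) → 0 ≤ Λ f := by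
    intro f hf
    set sq : C(MVSpectrum A, ℝ) :=
      ⟨fun s => Real.sqrt (f s), Real.continuous_sqrt.comp f.continuous⟩ with hsqdef
    set v : ↥A.carrier := g.symm (toC sq) with hvdef
    have hstar_sq : star (toC sq) = toC sq := by
      apply ContinuousMap.ext; intro s
      show starRingEnd ℂ ((sq s : ℂ)) = (sq s : ℂ)
      exact Complex.conj_ofReal _
    have hsq : toC sq * toC sq = toC f := by
      apply ContinuousMap.ext; intro s
      show ((sq s : ℂ)) * (sq s : ℂ) = (f s : ℂ)
      rw [← Complex.ofReal_mul]
      exact congrArg _ (Real.mul_self_sqrt (hf s))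
    have hv : (⟨star (v : (Fin N → ℝ) →ᵇ ℂ), A.star_mem _ v.2⟩ * v : ↥A.carrier)
        = g.symm (toC f) := by
      let v' : ↥A.S := v
      have h4 : (⟨star (v : (Fin N → ℝ) →ᵇ ℂ), A.star_mem _ v.2⟩ : ↥A.carrier)
          = star v' := rfl
      rw [h4]
      have h5 : star v' = g.symm (star (toC sq)) :=
        (map_star g.symm (toC sq)).symm
      erw [h5, hstar_sq, ← map_mul g.symm, hsq]
    have := (M_pos hM v).1
    rw [hv] at this
    exact this
  have h1 : Λ 1 = 1 := by
    have htoC1 : toC 1 = 1 := by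
      apply ContinuousMap.ext; intro s
      show ((1:ℝ) : ℂ) = 1
      norm_num
    show (M (g.symm (toC 1))).re = 1
    erw [htoC1, map_one g.symm, M_one hM]
    simp
  obtain ⟨β, hprob, hreg, hint⟩ := rmk_exists Λ hpos h1
  refine ⟨β, hprob, hreg, fun u => ?_⟩
  set Gu : C(MVSpectrum A, ℂ) := g u with hGudef
  let fr : C(MVSpectrum A, ℝ) := ⟨fun s => (Gu s).re, Complex.continuous_re.comp Gu.continuous⟩
  let fi : C(MVSpectrum A, ℝ) := ⟨fun s => (Gu s).im, Complex.continuous_im.comp Gu.continuous⟩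
  have hdecomp : toC fr + Complex.I • toC fi = Gu := by
    apply ContinuousMap.ext; intro s
    show ((Gu s).re : ℂ) + Complex.I * ((Gu s).im : ℂ) = Gu s
    rw [mul_comm]
    exact Complex.re_add_im _
  have hu : (u : ↥A.S) = g.symm (toC fr) + Complex.I • g.symm (toC fi) := by
    have h2 : (u : ↥A.S) = g.symm Gu := (g.symm_apply_apply u).symm
    erw [h2, ← hdecomp, map_add, _root_.map_smul]
  have hMu : M u = M (g.symm (toC fr)) + Complex.I * M (g.symm (toC fi)) := by
    have h3 := congrArg M hu
    erw [M_add hM, M_smul hM] at h3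
    exact h3
  -- realness of the two pieces
  have hreal : ∀ f : C(MVSpectrum A, ℝ), M (g.symm (toC f)) = ((Lfun f : ℝ) : ℂ) := by
    intro f
    set w : ↥A.carrier := g.symm (toC f) with hwdef
    have hstarf : star (toC f) = toC f := by
      apply ContinuousMap.ext; intro s
      show starRingEnd ℂ ((f s : ℂ)) = (f s : ℂ)
      exact Complex.conj_ofReal _
    have hstarw : (⟨star (w : (Fin N → ℝ) →ᵇ ℂ), A.star_mem _ w.2⟩ : ↥A.carrier) = w := by
      let w' : ↥A.S := w
      have h4 : (⟨star (w : (Fin N → ℝ) →ᵇ ℂ), A.star_mem _ w.2⟩ : ↥A.carrier)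
          = star w' := rfl
      erw [h4, show star w' = g.symm (star (toC f)) from (map_star g.symm (toC f)).symm, hstarf]
    have hMstar := M_star hM w
    rw [hstarw] at hMstar
    have him : (M w).im = 0 := by
      have h5 := congrArg Complex.im hMstar
      simp only [Complex.conj_im] at h5
      linarith
    apply Complex.ext
    · simp [Lfun]
      rfl
    · simpa using him
  rw [hreal fr, hreal fi] at hMu
  have hLr : Lfun fr = Λ fr := rfl
  have hLi : Lfun fi = Λ fi := rfl
  rw [hLr, hLi, hint fr, hint fi] at hMu
  -- integral identity
  have hintC : Integrable (fun s : MVSpectrum A => Gu s) β := by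
    have := (BoundedContinuousFunction.mkOfCompact Gu).integrable β
    exact this
  have hre := integral_re hintC
  have him := integral_im hintC
  simp only [RCLike.re_to_complex, RCLike.im_to_complex] at hre him
  have hgoal : M u = ∫ s : MVSpectrum A, Gu s ∂β := by
    apply Complex.ext
    · rw [hMu, ← hre]
      simp only [Complex.add_re, Complex.ofReal_re, Complex.mul_re, Complex.I_re,
        Complex.ofReal_im, Complex.I_im]
      ring_nf
      rfl
    · rw [hMu, ← him]
      simp only [Complex.add_im, Complex.ofReal_im, Complex.mul_im, Complex.I_re,
        Complex.I_im, Complex.ofReal_re]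
      ring_nf
      rfl
  exact hgoal


end Final
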